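/- Define g_n(s,p) = Σ_{i=1}^{n} [n brack i] (s)_i / p^i. For every n ≥ 1, every real p ≥ 1, and every complex s, one has |g_n(s,p)| ≤ g_n(|s|, p). -/

import Mathlib

open Finset

/-- Unsigned Stirling numbers of the first kind. -/
def stir : ℕ → ℕ → ℕ
  | 0, 0 => 1
  | 0, _ + 1 => 0
  | _ + 1, 0 => 0
  | n + 1, i + 1 => stir n i + n * stir n (i + 1)

/-- `g_n(s,p) = ∑_{i=1}^n [n brack i] (s)_i / p^i` for complex `s`. -/
noncomputable def g (n : ℕ) (s : ℂ) (p : ℝ) : ℂ :=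
  ∑ i ∈ Finset.Icc 1 n, (stir n i : ℂ) * (∏ j ∈ Finset.range i, (s - j)) / (p : ℂ) ^ i

/-- `g_n(s,p)` for real `s`. -/
noncomputable def gR (n : ℕ) (s p : ℝ) : ℝ :=
  ∑ i ∈ Finset.Icc 1 n, (stir n i : ℝ) * (∏ j ∈ Finset.range i, (s - j)) / p ^ i

/-- coefficient matrix of `P_n(s,x) = (1+x)^n g_n(s,1+x)`. -/
def cc : ℕ → ℕ → ℕ → ℕ
  | 0, a, b => if a = 0 ∧ b = 0 then 1 else 0
  | n + 1, a, b =>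
      (if a = 0 then 0 else cc n (a - 1) b)
      + n * (if b = 0 then 0 else cc n a (b - 1))
      + (b + 1) * cc n a (b + 1) + b * cc n a b

lemma cc_succ (n a b : ℕ) : cc (n+1) a b =
      (if a = 0 then 0 else cc n (a - 1) b)
      + n * (if b = 0 then 0 else cc n a (b - 1))
      + (b + 1) * cc n a (b + 1) + b * cc n a b := by
  rfl

lemma stir_zero (n : ℕ) (hn : 1 ≤ n) : stir n 0 = 0 := by
  cases n with
  | zero => omega
  | succ m => rfl

lemma stir_eq_zero : ∀ n i, n < i → stir n i = 0 := by
  intro n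
  induction n with
  | zero => intro i hi; cases i with
    | zero => omega
    | succ j => rfl
  | succ m ih =>
    intro i hi
    cases i with
    | zero => omega
    | succ j =>
      show stir m j + m * stir m (j+1) = 0
      rw [ih j (by omega), ih (j+1) (by omega)]
      ring

lemma cc_eq_zero : ∀ n a b, (n < a ∨ n < b) → cc n a b = 0 := by
  intro n
  induction n with
  | zero =>
    intro a b h
    show (if a = 0 ∧ b = 0 then 1 else 0) = 0
    rw [if_neg]; omega
  | succ m ih =>
    intro a b h
    rw [cc_succ, ih a (b+1) (by omega)]
    rcases h with h | h
    · rw [ih a b (by omega), if_neg (by omega), ih (a-1) b (by omega)]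
      rcases Nat.eq_zero_or_pos b with hb | hb
      · simp [hb]
      · rw [if_neg (by omega), ih a (b-1) (by omega)]; ring
    · rw [ih a b (by omega)]
      rcases Nat.eq_zero_or_pos a with ha | ha
      · rw [if_pos ha, if_neg (by omega), ih a (b-1) (by omega)]; ring
      · rw [if_neg (by omega), ih (a-1) b (by omega), if_neg (by omega),
          ih a (b-1) (by omega)]; ring

/-- `P_n(s,x)` as evaluated double sum of the coefficient matrix. -/
noncomputable def LL (n : ℕ) (s x : ℂ) : ℂ :=
  ∑ a ∈ range (n+1), ∑ b ∈ range (n+1), (cc n a b : ℂ) * s ^ a * x ^ b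

noncomputable def LL' (n : ℕ) (s x : ℂ) : ℂ :=
  ∑ a ∈ range (n+1), ∑ b ∈ range (n+1), (cc n a b : ℂ) * s ^ a * ((b : ℂ) * x ^ (b-1))

noncomputable def RR (n : ℕ) (s x : ℂ) : ℂ :=
  ∑ i ∈ range (n+1), (stir n i : ℂ) * (∏ j ∈ range i, (s - j)) * (1+x) ^ (n-i)

noncomputable def RR' (n : ℕ) (s x : ℂ) : ℂ :=
  ∑ i ∈ range (n+1), (stir n i : ℂ) * (∏ j ∈ range i, (s - j)) *
    (((n-i : ℕ) : ℂ) * (1+x) ^ (n-i-1))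

lemma hasDerivAt_LL (n : ℕ) (s x : ℂ) :
    HasDerivAt (fun y => LL n s y) (LL' n s x) x := by
  apply HasDerivAt.fun_sum
  intro a _
  apply HasDerivAt.fun_sum
  intro b _
  have h := (hasDerivAt_pow b x).const_mul ((cc n a b : ℂ) * s ^ a)
  convert h using 1

lemma hasDerivAt_RR (n : ℕ) (s x : ℂ) :
    HasDerivAt (fun y => RR n s y) (RR' n s x) x := by
  apply HasDerivAt.fun_sum
  intro i _
  have h1 : HasDerivAt (fun y : ℂ => 1 + y) 1 x := (hasDerivAt_id x).const_add 1
  have h := (h1.fun_pow (n-i)).const_mul ((stir n i : ℂ) * (∏ j ∈ range i, (s - j)))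
  exact h.congr_deriv (by ring)

/-- extend/shrink the ranges of a double sum whose terms vanish above thresholds. -/
lemma dsum_ext {M K m k : ℕ} (hm : M ≤ m) (hk : K ≤ k) (f : ℕ → ℕ → ℂ)
    (h0 : ∀ a b, (M ≤ a ∨ K ≤ b) → f a b = 0) :
    ∑ a ∈ range m, ∑ b ∈ range k, f a b = ∑ a ∈ range M, ∑ b ∈ range K, f a b := by
  rw [← Finset.sum_subset (Finset.range_subset_range.2 hm)]
  · apply Finset.sum_congr rfl
    intro a _
    rw [← Finset.sum_subset (Finset.range_subset_range.2 hk)]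
    intro b _ hb
    exact h0 a b (Or.inr (by simpa using hb))
  · intro a _ ha
    exact Finset.sum_eq_zero fun b _ => h0 a b (Or.inl (by simpa using ha))

lemma cast_mul_pow (k : ℕ) (y : ℂ) : (k : ℂ) * y ^ k = (k : ℂ) * y ^ (k-1) * y := by
  cases k with
  | zero => simp
  | succ j => rw [pow_succ]; push_cast; ring

lemma LL_rec (n : ℕ) (s x : ℂ) :
    LL (n+1) s x = (s + n*x) * LL n s x + (1+x) * LL' n s x := by
  have expand : ∀ a b : ℕ, ((cc (n+1) a b : ℂ)) * s ^ a * x ^ b =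
      (if a = 0 then (0:ℂ) else (cc n (a-1) b : ℂ)) * s ^ a * x ^ b
      + (n:ℂ) * ((if b = 0 then (0:ℂ) else (cc n a (b-1) : ℂ)) * s ^ a * x ^ b)
      + (((b:ℂ)+1) * (cc n a (b+1) : ℂ) * s ^ a * x ^ b)
      + ((b:ℂ) * (cc n a b : ℂ) * s ^ a * x ^ b) := by
    intro a b
    rw [cc_succ]
    push_cast [apply_ite (fun t : ℕ => (t:ℂ))]
    ring
  have hS1 : ∑ a ∈ range (n+2), ∑ b ∈ range (n+2),
      (if a = 0 then (0:ℂ) else (cc n (a-1) b : ℂ)) * s ^ a * x ^ b = s * LL n s x := by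
    rw [Finset.sum_range_succ']
    simp only [Nat.add_sub_cancel, if_pos, Nat.succ_ne_zero, if_neg, ite_false, ite_true,
      zero_mul, Finset.sum_const_zero, add_zero]
    rw [dsum_ext (le_refl (n+1)) (by omega : n+1 ≤ n+2)
      (fun a b => (cc n a b : ℂ) * s ^ (a+1) * x ^ b)
      (fun a b h => by simp [cc_eq_zero n a b (by omega)])]
    rw [LL, Finset.mul_sum]
    apply Finset.sum_congr rfl; intro a _
    rw [Finset.mul_sum]
    apply Finset.sum_congr rfl; intro b _
    ring
  have hS2 : ∑ a ∈ range (n+2), ∑ b ∈ range (n+2),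
      (n:ℂ) * ((if b = 0 then (0:ℂ) else (cc n a (b-1) : ℂ)) * s ^ a * x ^ b)
      = (n:ℂ) * x * LL n s x := by
    have inner : ∀ a : ℕ, ∑ b ∈ range (n+2),
        (n:ℂ) * ((if b = 0 then (0:ℂ) else (cc n a (b-1) : ℂ)) * s ^ a * x ^ b)
        = ∑ b ∈ range (n+1), (n:ℂ) * ((cc n a b : ℂ) * s ^ a * x ^ (b+1)) := by
      intro a
      rw [Finset.sum_range_succ']
      simp only [Nat.add_sub_cancel, Nat.succ_ne_zero, ite_false, ite_true,
        zero_mul, mul_zero, add_zero]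
    rw [Finset.sum_congr rfl (fun a _ => inner a)]
    rw [dsum_ext (by omega : n+1 ≤ n+2) (le_refl (n+1))
      (fun a b => (n:ℂ) * ((cc n a b : ℂ) * s ^ a * x ^ (b+1)))
      (fun a b h => by simp [cc_eq_zero n a b (by omega)])]
    rw [LL, Finset.mul_sum]
    apply Finset.sum_congr rfl; intro a _
    rw [Finset.mul_sum]
    apply Finset.sum_congr rfl; intro b _
    rw [pow_succ]
    ring
  have hS3 : ∑ a ∈ range (n+2), ∑ b ∈ range (n+2),
      (((b:ℂ)+1) * (cc n a (b+1) : ℂ) * s ^ a * x ^ b) = LL' n s x := by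
    rw [dsum_ext (by omega : n+1 ≤ n+2) (by omega : n ≤ n+2)
      (fun a b => ((b:ℂ)+1) * (cc n a (b+1) : ℂ) * s ^ a * x ^ b)
      (fun a b h => by simp [cc_eq_zero n a (b+1) (by omega)])]
    rw [LL']
    apply Finset.sum_congr rfl; intro a _
    rw [Finset.sum_range_succ']
    simp only [Nat.cast_zero, zero_mul, mul_zero, add_zero, Nat.add_sub_cancel]
    apply Finset.sum_congr rfl; intro b _
    push_cast
    ring
  have hS4 : ∑ a ∈ range (n+2), ∑ b ∈ range (n+2),
      ((b:ℂ) * (cc n a b : ℂ) * s ^ a * x ^ b) = x * LL' n s x := by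
    rw [dsum_ext (by omega : n+1 ≤ n+2) (by omega : n+1 ≤ n+2)
      (fun a b => (b:ℂ) * (cc n a b : ℂ) * s ^ a * x ^ b)
      (fun a b h => by simp [cc_eq_zero n a b (by omega)])]
    rw [LL', Finset.mul_sum]
    apply Finset.sum_congr rfl; intro a _
    rw [Finset.mul_sum]
    apply Finset.sum_congr rfl; intro b _
    rcases Nat.eq_zero_or_pos b with hb | hb
    · simp [hb]
    · rw [show x ^ b = x ^ (b-1) * x by rw [← pow_succ]; congr 1; omega]
      ring
  rw [show LL (n+1) s x = ∑ a ∈ range (n+2), ∑ b ∈ range (n+2),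
      ((cc (n+1) a b : ℂ)) * s ^ a * x ^ b from rfl]
  rw [Finset.sum_congr rfl (fun a _ => Finset.sum_congr rfl (fun b _ => expand a b))]
  simp only [Finset.sum_add_distrib]
  rw [hS1, hS2, hS3, hS4]
  ring

lemma stir_succ (n i : ℕ) : stir (n+1) (i+1) = stir n i + n * stir n (i+1) := rfl

lemma stir_zero' (n : ℕ) : (n:ℂ) * (stir n 0 : ℂ) = 0 := by
  cases n with
  | zero => simp
  | succ m => rw [show stir (m+1) 0 = 0 from rfl]; simp

lemma RR_rec (n : ℕ) (s x : ℂ) :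
    RR (n+1) s x = (s + n*x) * RR n s x + (1+x) * RR' n s x := by
  have h0 : RR (n+1) s x = ∑ i ∈ range (n+1),
      ((stir n i : ℂ) + (n:ℂ) * (stir n (i+1) : ℂ))
        * ((∏ j ∈ range i, (s - j)) * (s - i)) * (1+x) ^ (n-i) := by
    rw [RR, Finset.sum_range_succ']
    rw [stir_zero (n+1) (by omega)]
    simp only [Nat.cast_zero, zero_mul, add_zero, Nat.succ_sub_succ]
    apply Finset.sum_congr rfl; intro i _
    rw [stir_succ, Finset.prod_range_succ]
    push_cast
    ring
  have hB : ∑ i ∈ range (n+1), ((n:ℂ) * (stir n (i+1) : ℂ))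
        * ((∏ j ∈ range i, (s - j)) * (s - i)) * (1+x) ^ (n-i)
      = (n:ℂ) * (1+x) * RR n s x := by
    rw [Finset.sum_range_succ, stir_eq_zero n (n+1) (by omega)]
    rw [RR, Finset.mul_sum, Finset.sum_range_succ']
    simp only [Nat.cast_zero, mul_zero, zero_mul, add_zero, Finset.prod_range_zero,
      mul_one, Nat.sub_zero]
    rw [show ((n:ℂ)*(1+x)) * ((stir n 0 : ℂ) * (1+x)^n) = 0 by
      linear_combination (1+x) * (1+x)^n * stir_zero' n]
    rw [add_zero]
    apply Finset.sum_congr rfl; intro i hi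
    simp only [Finset.mem_range] at hi
    rw [Finset.prod_range_succ]
    rw [show n - (i+1) = n - i - 1 by omega,
      show (1+x) ^ (n-i) = (1+x) ^ (n-i-1) * (1+x) by
        rw [← pow_succ]; congr 1; omega]
    ring
  have hA : ∑ i ∈ range (n+1), (stir n i : ℂ)
        * ((∏ j ∈ range i, (s - j)) * (s - i)) * (1+x) ^ (n-i)
      = ((s + n*x) - (n:ℂ)*(1+x)) * RR n s x + (1+x) * RR' n s x := by
    rw [RR, RR', Finset.mul_sum, Finset.mul_sum, ← Finset.sum_add_distrib]
    apply Finset.sum_congr rfl; intro i hi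
    simp only [Finset.mem_range] at hi
    have hni : ((n-i : ℕ) : ℂ) = (n:ℂ) - (i:ℂ) := by
      rw [Nat.cast_sub (by omega)]
    have hpow := cast_mul_pow (n-i) (1+x)
    rw [hni] at hpow
    linear_combination (stir n i : ℂ) * (∏ j ∈ range i, (s - j)) * hpow
      - (stir n i : ℂ) * (∏ j ∈ range i, (s - j)) * (1+x)^(n-i-1) * (1+x) * hni
  calc RR (n+1) s x
      = ∑ i ∈ range (n+1), ((stir n i : ℂ) + (n:ℂ) * (stir n (i+1) : ℂ))
        * ((∏ j ∈ range i, (s - j)) * (s - i)) * (1+x) ^ (n-i) := h0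
    _ = (∑ i ∈ range (n+1), (stir n i : ℂ)
        * ((∏ j ∈ range i, (s - j)) * (s - i)) * (1+x) ^ (n-i))
        + ∑ i ∈ range (n+1), ((n:ℂ) * (stir n (i+1) : ℂ))
        * ((∏ j ∈ range i, (s - j)) * (s - i)) * (1+x) ^ (n-i) := by
        rw [← Finset.sum_add_distrib]
        apply Finset.sum_congr rfl; intro i _
        ring
    _ = (s + n*x) * RR n s x + (1+x) * RR' n s x := by
        rw [hA, hB]; ring

lemma LL_eq_RR : ∀ (n : ℕ) (s x : ℂ), LL n s x = RR n s x := by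
  intro n
  induction n with
  | zero =>
    intro s x
    rw [LL, RR]
    norm_num [show cc 0 0 0 = 1 from rfl, show stir 0 0 = 1 from rfl]
  | succ m ih =>
    intro s x
    have hfun : (fun y => LL m s y) = (fun y => RR m s y) := funext (fun y => ih s y)
    have hder : LL' m s x = RR' m s x := by
      have h1 := hasDerivAt_LL m s x
      have h2 := hasDerivAt_RR m s x
      rw [← hfun] at h2
      exact h1.unique h2
    rw [LL_rec, RR_rec, ih s x, hder]

lemma RR_eq_g (n : ℕ) (hn : 1 ≤ n) (s : ℂ) (p : ℝ) (hp : 0 < p) :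
    RR n s ((p:ℂ) - 1) = (p:ℂ)^n * g n s p := by
  have hp0 : (p:ℂ) ≠ 0 := by
    simpa using (ne_of_gt hp)
  rw [RR, g, Finset.mul_sum]
  have h1x : (1 : ℂ) + ((p:ℂ) - 1) = (p:ℂ) := by ring
  rw [h1x]
  rw [Finset.sum_range_succ', stir_zero n hn]
  simp only [Nat.cast_zero, zero_mul, add_zero]
  rw [← Finset.Ico_add_one_right_eq_Icc, Finset.sum_Ico_eq_sum_range]
  apply Finset.sum_congr rfl; intro i hi
  simp only [Finset.mem_range] at hi
  rw [show 1 + i = i + 1 by omega]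
  rw [pow_sub₀ (p:ℂ) hp0 (by omega : i + 1 ≤ n)]
  ring

lemma gR_cast (n : ℕ) (t p : ℝ) : ((gR n t p : ℝ) : ℂ) = g n (t : ℂ) p := by
  rw [gR, g]
  push_cast
  rfl


theorem stmt_9 (n : ℕ) (hn : 1 ≤ n) (p : ℝ) (hp : 1 ≤ p) (s : ℂ) :
    ‖g n s p‖ ≤ gR n ‖s‖ p := by
  have hp0 : (0:ℝ) < p := by linarith
  have hx0 : (0:ℝ) ≤ p - 1 := by linarith
  set t := ‖s‖ with ht
  have hgL : LL n s ((p:ℂ) - 1) = (p:ℂ)^n * g n s p := by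
    rw [LL_eq_RR, RR_eq_g n hn s p hp0]
  set M : ℝ := ∑ a ∈ range (n+1), ∑ b ∈ range (n+1), (cc n a b : ℝ) * t^a * (p-1)^b with hMdef
  have habs : ‖LL n s ((p:ℂ)-1)‖ ≤ M := by
    rw [LL, hMdef]
    refine le_trans (norm_sum_le _ _) ?_
    apply Finset.sum_le_sum; intro a _
    refine le_trans (norm_sum_le _ _) ?_
    apply Finset.sum_le_sum; intro b _
    rw [norm_mul, norm_mul, norm_pow, norm_pow]
    have h2 : ‖(p:ℂ) - 1‖ = p - 1 := by
      rw [show ((p:ℂ) - 1) = ((p - 1 : ℝ) : ℂ) by push_cast; ring, Complex.norm_real,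
        Real.norm_of_nonneg hx0]
    rw [h2, Complex.norm_natCast]
  have hM : (M : ℂ) = LL n (t:ℂ) ((p:ℂ)-1) := by
    rw [LL, hMdef]
    push_cast
    rfl
  have hMg : M = p^n * gR n t p := by
    have hc : (M:ℂ) = ((p^n * gR n t p : ℝ) : ℂ) := by
      rw [hM, LL_eq_RR, RR_eq_g n hn (t:ℂ) p hp0, ← gR_cast]
      push_cast
      ring
    exact_mod_cast hc
  have habsg : p^n * ‖g n s p‖ = ‖LL n s ((p:ℂ)-1)‖ := by
    rw [hgL, norm_mul, norm_pow, Complex.norm_real, Real.norm_of_nonneg hp0.le]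
  have hfin : p^n * ‖g n s p‖ ≤ p^n * gR n t p := by
    rw [habsg, ← hMg]; exact habs
  exact le_of_mul_le_mul_left hfin (pow_pos hp0 n)
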